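/- Let A be a ring and let N₁, N₂ be non-isomorphic A-modules with local endomorphism rings. An endomorphism α of N₁ ⊕ N₂, written as a 2×2 matrix α = (α_{ij}) with α_{ij} ∈ Hom_A(N_j, N_i), is an automorphism if and only if α₁₁ and α₂₂ are automorphisms. -/

import Mathlib

open LinearMap

section aux

variable {A : Type*} [Ring A] {N₁ N₂ : Type*} [AddCommGroup N₁] [AddCommGroup N₂]
    [Module A N₁] [Module A N₂]

private lemma nc_isUnit_or {R : Type*} [Ring R] [IsLocalRing R] {a b : R}
    (h : IsUnit (a + b)) : IsUnit a ∨ IsUnit b := by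
  rcases h with ⟨u, hu⟩
  have h1 : (↑u⁻¹ * a) + (↑u⁻¹ * b) = 1 := by rw [← mul_add, ← hu]; exact u.inv_mul
  have hrec : ∀ c : R, IsUnit (↑u⁻¹ * c) → IsUnit c := by
    intro c hc
    have : c = ↑u * (↑u⁻¹ * c) := by rw [← mul_assoc, u.mul_inv, one_mul]
    rw [this]
    exact (u.isUnit).mul hc
  rcases IsLocalRing.isUnit_or_isUnit_of_add_one h1 with h | h
  · exact Or.inl (hrec a h)
  · exact Or.inr (hrec b h)

private lemma idem_eq_one_of_isUnit {R : Type*} [Ring R] {e : R}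
    (he : e * e = e) (hu : IsUnit e) : e = 1 :=
  hu.mul_left_cancel (by rw [he, mul_one])

/-- A composite `N₁ → N₂ → N₁` through a non-isomorphic module is never a unit. -/
private lemma comp_nonunit
    (hiso : IsEmpty (N₁ ≃ₗ[A] N₂))
    [IsLocalRing (Module.End A N₁)] [IsLocalRing (Module.End A N₂)]
    (γ : N₁ →ₗ[A] N₂) (δ : N₂ →ₗ[A] N₁) :
    ¬ IsUnit (γ ∘ₗ δ : Module.End A N₂) := by
  rintro ⟨u, hu⟩
  set δ' : N₂ →ₗ[A] N₁ := δ ∘ₗ (↑u⁻¹ : Module.End A N₂) with hδ'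
  have h1 : (γ ∘ₗ δ' : Module.End A N₂) = 1 := by
    rw [hδ', ← comp_assoc, ← hu, ← Module.End.mul_eq_comp]
    exact u.mul_inv
  set e : Module.End A N₁ := δ' ∘ₗ γ with he
  have hee : e * e = e := by
    show (δ' ∘ₗ γ) ∘ₗ (δ' ∘ₗ γ) = δ' ∘ₗ γ
    rw [comp_assoc, ← comp_assoc γ δ' γ, h1, Module.End.one_eq_id, id_comp]
  have hsum : e + (1 - e) = 1 := by abel
  rcases IsLocalRing.isUnit_or_isUnit_of_add_one hsum with h | h
  · have h2 : e = 1 := idem_eq_one_of_isUnit hee h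
    exact hiso.elim (LinearEquiv.ofLinear γ δ' h1 h2)
  · have hf : (1 - e) * (1 - e) = 1 - e := by
      rw [mul_sub, sub_mul, sub_mul, one_mul, mul_one, hee]; abel
    have h2 : (1 : Module.End A N₁) - e = 1 := idem_eq_one_of_isUnit hf h
    have h3 : e = 0 := by rwa [sub_eq_self] at h2
    have : (1 : Module.End A N₂) = 0 := by
      calc (1 : Module.End A N₂) = (γ ∘ₗ δ') * (γ ∘ₗ δ') := by rw [h1, one_mul]
        _ = γ ∘ₗ (e ∘ₗ δ') := rfl
        _ = 0 := by rw [h3]; ext x; simp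
    exact one_ne_zero this

/-- Units minus nonunits are units in a local ring. -/
private lemma unit_sub_nonunit {R : Type*} [Ring R] [IsLocalRing R] {u n : R}
    (hu : IsUnit u) (hn : ¬ IsUnit n) : IsUnit (u - n) := by
  by_contra h
  have hsum : u - n + n = u := by abel
  rcases nc_isUnit_or (hsum.symm ▸ hu) with h' | h'
  · exact h h'
  · exact hn h'

end aux

set_option maxHeartbeats 1000000 in
/-- For non-isomorphic `A`-modules `N₁, N₂` with local endomorphism rings, an
endomorphism `α` of `N₁ ⊕ N₂` given by the matrix `(α_{ij})` is an automorphism if and only if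
the diagonal entries `α₁₁` and `α₂₂` are automorphisms. -/
theorem stmt_3 {A : Type*} [Ring A] {N₁ N₂ : Type*} [AddCommGroup N₁] [AddCommGroup N₂]
    [Module A N₁] [Module A N₂]
    (hiso : IsEmpty (N₁ ≃ₗ[A] N₂))
    [IsLocalRing (Module.End A N₁)] [IsLocalRing (Module.End A N₂)]
    (α : Module.End A (N₁ × N₂))
    (α₁₁ : Module.End A N₁) (α₁₂ : N₂ →ₗ[A] N₁)
    (α₂₁ : N₁ →ₗ[A] N₂) (α₂₂ : Module.End A N₂)
    (hα : ∀ x : N₁ × N₂, α x = (α₁₁ x.1 + α₁₂ x.2, α₂₁ x.1 + α₂₂ x.2)) :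
    IsUnit α ↔ IsUnit α₁₁ ∧ IsUnit α₂₂ := by
  have hiso' : IsEmpty (N₂ ≃ₗ[A] N₁) := ⟨fun f => hiso.elim f.symm⟩
  constructor
  · rintro ⟨u, hu⟩
    set β : Module.End A (N₁ × N₂) := ↑u⁻¹ with hβ
    have hαβ : ∀ x, α (β x) = x := fun x => by
      have : α * β = 1 := by rw [← hu, hβ]; exact u.mul_inv
      simpa using congrFun (congrArg DFunLike.coe this) x
    have hβα : ∀ x, β (α x) = x := fun x => by
      have : β * α = 1 := by rw [← hu, hβ]; exact u.inv_mul
      simpa using congrFun (congrArg DFunLike.coe this) x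
    -- components of β
    set b₁₁ : Module.End A N₁ := (fst A N₁ N₂) ∘ₗ β ∘ₗ (inl A N₁ N₂) with hb11
    set b₂₁ : N₁ →ₗ[A] N₂ := (snd A N₁ N₂) ∘ₗ β ∘ₗ (inl A N₁ N₂) with hb21
    set b₁₂ : N₂ →ₗ[A] N₁ := (fst A N₁ N₂) ∘ₗ β ∘ₗ (inr A N₁ N₂) with hb12
    set b₂₂ : Module.End A N₂ := (snd A N₁ N₂) ∘ₗ β ∘ₗ (inr A N₁ N₂) with hb22
    constructor
    · -- α₁₁ is a unit
      have h1 : α₁₁ * b₁₁ + (α₁₂ ∘ₗ b₂₁ : Module.End A N₁) = 1 := by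
        ext x
        have := hαβ (x, 0)
        rw [hα] at this
        have h := congrArg Prod.fst this
        simpa [hb11, hb21, Module.End.mul_eq_comp] using h
      have h2 : b₁₁ * α₁₁ + (b₁₂ ∘ₗ α₂₁ : Module.End A N₁) = 1 := by
        ext x
        have h := congrArg Prod.fst (hβα (x, 0))
        rw [hα (x, 0)] at h
        simp only [map_zero, add_zero] at h
        have hsplit : β (α₁₁ x, α₂₁ x) = β (α₁₁ x, 0) + β (0, α₂₁ x) := by
          rw [← map_add]; simp
        rw [hsplit] at h
        simpa [hb11, hb12, Module.End.mul_eq_comp] using h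
      have hu1 : IsUnit (α₁₁ * b₁₁) := by
        rcases nc_isUnit_or (h1 ▸ isUnit_one) with h | h
        · exact h
        · exact absurd h (comp_nonunit hiso' α₁₂ b₂₁)
      have hu2 : IsUnit (b₁₁ * α₁₁) := by
        rcases nc_isUnit_or (h2 ▸ isUnit_one) with h | h
        · exact h
        · exact absurd h (comp_nonunit hiso' b₁₂ α₂₁)
      rcases hu1 with ⟨v, hv⟩
      rcases hu2 with ⟨w, hw⟩
      have hr : α₁₁ * (b₁₁ * ↑v⁻¹) = 1 := by rw [← mul_assoc, ← hv]; exact v.mul_inv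
      have hl : (↑w⁻¹ * b₁₁) * α₁₁ = 1 := by rw [mul_assoc, ← hw]; exact w.inv_mul
      have heq : (↑w⁻¹ * b₁₁ : Module.End A N₁) = b₁₁ * ↑v⁻¹ := by
        calc (↑w⁻¹ * b₁₁ : Module.End A N₁) = (↑w⁻¹ * b₁₁) * (α₁₁ * (b₁₁ * ↑v⁻¹)) := by
              rw [hr, mul_one]
          _ = ((↑w⁻¹ * b₁₁) * α₁₁) * (b₁₁ * ↑v⁻¹) := by simp only [mul_assoc]
          _ = b₁₁ * ↑v⁻¹ := by rw [hl, one_mul]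
      exact ⟨⟨α₁₁, b₁₁ * ↑v⁻¹, hr, heq ▸ hl⟩, rfl⟩
    · -- α₂₂ is a unit
      have h1 : α₂₂ * b₂₂ + (α₂₁ ∘ₗ b₁₂ : Module.End A N₂) = 1 := by
        ext x
        have := hαβ (0, x)
        rw [hα] at this
        have h := congrArg Prod.snd this
        simpa [hb22, hb12, add_comm, Module.End.mul_eq_comp] using h
      have h2 : b₂₂ * α₂₂ + (b₂₁ ∘ₗ α₁₂ : Module.End A N₂) = 1 := by
        ext x
        have h := congrArg Prod.snd (hβα (0, x))
        rw [hα (0, x)] at h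
        simp only [map_zero, zero_add] at h
        have hsplit : β (α₁₂ x, α₂₂ x) = β (α₁₂ x, 0) + β (0, α₂₂ x) := by
          rw [← map_add]; simp
        rw [hsplit] at h
        simpa [hb22, hb21, add_comm, Module.End.mul_eq_comp] using h
      have hu1 : IsUnit (α₂₂ * b₂₂) := by
        rcases nc_isUnit_or (h1 ▸ isUnit_one) with h | h
        · exact h
        · exact absurd h (comp_nonunit hiso α₂₁ b₁₂)
      have hu2 : IsUnit (b₂₂ * α₂₂) := by
        rcases nc_isUnit_or (h2 ▸ isUnit_one) with h | h
        · exact h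
        · exact absurd h (comp_nonunit hiso b₂₁ α₁₂)
      rcases hu1 with ⟨v, hv⟩
      rcases hu2 with ⟨w, hw⟩
      have hr : α₂₂ * (b₂₂ * ↑v⁻¹) = 1 := by rw [← mul_assoc, ← hv]; exact v.mul_inv
      have hl : (↑w⁻¹ * b₂₂) * α₂₂ = 1 := by rw [mul_assoc, ← hw]; exact w.inv_mul
      have heq : (↑w⁻¹ * b₂₂ : Module.End A N₂) = b₂₂ * ↑v⁻¹ := by
        calc (↑w⁻¹ * b₂₂ : Module.End A N₂) = (↑w⁻¹ * b₂₂) * (α₂₂ * (b₂₂ * ↑v⁻¹)) := by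
              rw [hr, mul_one]
          _ = ((↑w⁻¹ * b₂₂) * α₂₂) * (b₂₂ * ↑v⁻¹) := by simp only [mul_assoc]
          _ = b₂₂ * ↑v⁻¹ := by rw [hl, one_mul]
      exact ⟨⟨α₂₂, b₂₂ * ↑v⁻¹, hr, heq ▸ hl⟩, rfl⟩
  · rintro ⟨⟨ua, hua⟩, hd⟩
    set a' : Module.End A N₁ := ↑ua⁻¹ with ha'
    have haa' : α₁₁ * a' = 1 := by rw [← hua]; exact ua.mul_inv
    have ha'a : a' * α₁₁ = 1 := by rw [← hua]; exact ua.inv_mul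
    have ha'id : a' ∘ₗ α₁₁ = LinearMap.id := ha'a
    set s : Module.End A N₂ := α₂₂ - α₂₁ ∘ₗ a' ∘ₗ α₁₂ with hs
    have hsu : IsUnit s :=
      unit_sub_nonunit hd (comp_nonunit hiso α₂₁ (a' ∘ₗ α₁₂))
    rcases hsu with ⟨us, hus⟩
    set s' : Module.End A N₂ := ↑us⁻¹ with hs'def
    have hss' : s * s' = 1 := by rw [← hus]; exact us.mul_inv
    have hs's : s' * s = 1 := by rw [← hus]; exact us.inv_mul
    -- inverse matrix entries
    set m₁₁ : Module.End A N₁ := a' + a' ∘ₗ α₁₂ ∘ₗ s' ∘ₗ α₂₁ ∘ₗ a' with hm11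
    set m₁₂ : N₂ →ₗ[A] N₁ := -(a' ∘ₗ α₁₂ ∘ₗ s') with hm12
    set m₂₁ : N₁ →ₗ[A] N₂ := -(s' ∘ₗ α₂₁ ∘ₗ a') with hm21
    set β : Module.End A (N₁ × N₂) :=
      ((m₁₁ ∘ₗ fst A N₁ N₂) + (m₁₂ ∘ₗ snd A N₁ N₂)).prod
        ((m₂₁ ∘ₗ fst A N₁ N₂) + (s' ∘ₗ snd A N₁ N₂)) with hβ
    have hβx : ∀ x : N₁ × N₂, β x = (m₁₁ x.1 + m₁₂ x.2, m₂₁ x.1 + s' x.2) := fun x => by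
      simp [hβ]
    -- operator identities
    have I1 : α₁₁ ∘ₗ m₁₁ + α₁₂ ∘ₗ m₂₁ = 1 := by
      rw [hm11, hm21]
      simp only [comp_add, comp_neg, ← comp_assoc]
      rw [← Module.End.mul_eq_comp α₁₁ a', haa']
      simp only [Module.End.one_eq_id, id_comp, comp_assoc]
      abel
    have I2 : (α₁₁ ∘ₗ m₁₂ + α₁₂ ∘ₗ s' : N₂ →ₗ[A] N₁) = 0 := by
      rw [hm12]
      simp only [comp_neg, ← comp_assoc]
      rw [← Module.End.mul_eq_comp α₁₁ a', haa']
      simp only [Module.End.one_eq_id, id_comp]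
      abel
    have I3 : (α₂₁ ∘ₗ m₁₁ + α₂₂ ∘ₗ m₂₁ : N₁ →ₗ[A] N₂) = 0 := by
      rw [hm11, hm21]
      have key : α₂₁ ∘ₗ (a' ∘ₗ α₁₂ ∘ₗ s' ∘ₗ α₂₁ ∘ₗ a') - α₂₂ ∘ₗ (s' ∘ₗ α₂₁ ∘ₗ a')
          = -(α₂₁ ∘ₗ a') := by
        have h2 : (α₂₁ ∘ₗ a' ∘ₗ α₁₂ - α₂₂) ∘ₗ (s' ∘ₗ α₂₁ ∘ₗ a') = -(α₂₁ ∘ₗ a') := by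
          have h : (α₂₁ ∘ₗ a' ∘ₗ α₁₂ - α₂₂ : Module.End A N₂) = -s := by
            rw [hs]; abel
          rw [h]
          have h4 : (-s) ∘ₗ (s' ∘ₗ α₂₁ ∘ₗ a') = -((s ∘ₗ s') ∘ₗ (α₂₁ ∘ₗ a')) := by
            simp only [neg_comp, comp_assoc]
          rw [h4, ← Module.End.mul_eq_comp s s', hss', Module.End.one_eq_id, id_comp]
        rw [sub_comp] at h2
        rw [← h2]
        simp only [comp_assoc]
      simp only [comp_neg]
      rw [← sub_eq_add_neg, comp_add]
      rw [add_sub_assoc, key]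
      abel
    have I4 : α₂₁ ∘ₗ m₁₂ + α₂₂ ∘ₗ s' = 1 := by
      rw [hm12]
      have h2 : α₂₂ ∘ₗ s' - α₂₁ ∘ₗ (a' ∘ₗ α₁₂ ∘ₗ s') = (α₂₂ - α₂₁ ∘ₗ a' ∘ₗ α₁₂) ∘ₗ s' := by
        rw [sub_comp]; simp only [comp_assoc]
      rw [comp_neg, ← sub_eq_neg_add, h2, ← hs, ← Module.End.mul_eq_comp s s', hss']
    have hαβ : α * β = 1 := by
      refine LinearMap.ext fun x => ?_
      show α (β x) = x
      rw [hβx, hα]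
      have e1 := congrFun (congrArg DFunLike.coe I1) x.1
      have e2 := congrFun (congrArg DFunLike.coe I2) x.2
      have e3 := congrFun (congrArg DFunLike.coe I3) x.1
      have e4 := congrFun (congrArg DFunLike.coe I4) x.2
      simp only [LinearMap.add_apply, comp_apply, Module.End.one_apply, LinearMap.zero_apply] at e1 e2 e3 e4
      simp only [map_add]
      refine Prod.ext ?_ ?_
      · show α₁₁ (m₁₁ x.1) + α₁₁ (m₁₂ x.2) + (α₁₂ (m₂₁ x.1) + α₁₂ (s' x.2)) = x.1
        rw [show α₁₁ (m₁₁ x.1) + α₁₁ (m₁₂ x.2) + (α₁₂ (m₂₁ x.1) + α₁₂ (s' x.2))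
          = (α₁₁ (m₁₁ x.1) + α₁₂ (m₂₁ x.1)) + (α₁₁ (m₁₂ x.2) + α₁₂ (s' x.2)) by abel,
          e1, e2, add_zero]
      · show α₂₁ (m₁₁ x.1) + α₂₁ (m₁₂ x.2) + (α₂₂ (m₂₁ x.1) + α₂₂ (s' x.2)) = x.2
        rw [show α₂₁ (m₁₁ x.1) + α₂₁ (m₁₂ x.2) + (α₂₂ (m₂₁ x.1) + α₂₂ (s' x.2))
          = (α₂₁ (m₁₁ x.1) + α₂₂ (m₂₁ x.1)) + (α₂₁ (m₁₂ x.2) + α₂₂ (s' x.2)) by abel,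
          e3, e4, zero_add]
    -- reverse identities
    have J1 : m₁₁ ∘ₗ α₁₁ + m₁₂ ∘ₗ α₂₁ = 1 := by
      rw [hm11, hm12]
      simp only [add_comp, neg_comp, comp_assoc, ha'id, comp_id]
      rw [← Module.End.one_eq_id]
      abel
    have J2 : (m₁₁ ∘ₗ α₁₂ + m₁₂ ∘ₗ α₂₂ : N₂ →ₗ[A] N₁) = 0 := by
      rw [hm11, hm12]
      have key : a' ∘ₗ α₁₂ ∘ₗ s' ∘ₗ α₂₁ ∘ₗ a' ∘ₗ α₁₂ - (a' ∘ₗ α₁₂ ∘ₗ s') ∘ₗ α₂₂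
          = -(a' ∘ₗ α₁₂) := by
        have h : ((a' ∘ₗ α₁₂ ∘ₗ s') ∘ₗ (α₂₁ ∘ₗ a' ∘ₗ α₁₂ - α₂₂) : N₂ →ₗ[A] N₁)
            = -(a' ∘ₗ α₁₂) := by
          have hneg : (α₂₁ ∘ₗ a' ∘ₗ α₁₂ - α₂₂ : Module.End A N₂) = -s := by
            rw [hs]; abel
          rw [hneg, comp_neg]
          have h4 : ((a' ∘ₗ α₁₂ ∘ₗ s') ∘ₗ s : N₂ →ₗ[A] N₁)
              = (a' ∘ₗ α₁₂) ∘ₗ (s' ∘ₗ s) := by simp only [comp_assoc]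
          rw [h4, show (s' ∘ₗ s : Module.End A N₂) = 1 from hs's, Module.End.one_eq_id, comp_id]
        rw [comp_sub] at h
        rw [← h]
        simp only [comp_assoc]
      simp only [comp_assoc] at key
      rw [add_comp, neg_comp, ← sub_eq_add_neg]
      simp only [comp_assoc]
      rw [add_sub_assoc, key]
      abel
    have J3 : (m₂₁ ∘ₗ α₁₁ + s' ∘ₗ α₂₁ : N₁ →ₗ[A] N₂) = 0 := by
      rw [hm21]
      simp only [neg_comp, comp_assoc, ha'id, comp_id]
      abel
    have J4 : m₂₁ ∘ₗ α₁₂ + s' ∘ₗ α₂₂ = 1 := by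
      rw [hm21]
      have h2 : ((-(s' ∘ₗ α₂₁ ∘ₗ a')) ∘ₗ α₁₂ + s' ∘ₗ α₂₂ : Module.End A N₂)
          = s' ∘ₗ (α₂₂ - α₂₁ ∘ₗ a' ∘ₗ α₁₂) := by
        rw [comp_sub]
        simp only [neg_comp, comp_assoc]
        abel
      rw [h2, ← hs, ← Module.End.mul_eq_comp s' s]
      exact hs's
    have hβα : β * α = 1 := by
      refine LinearMap.ext fun x => ?_
      show β (α x) = x
      rw [hα, hβx]
      have e1 := congrFun (congrArg DFunLike.coe J1) x.1
      have e2 := congrFun (congrArg DFunLike.coe J2) x.2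
      have e3 := congrFun (congrArg DFunLike.coe J3) x.1
      have e4 := congrFun (congrArg DFunLike.coe J4) x.2
      simp only [LinearMap.add_apply, comp_apply, Module.End.one_apply, LinearMap.zero_apply] at e1 e2 e3 e4
      simp only [map_add]
      refine Prod.ext ?_ ?_
      · show m₁₁ (α₁₁ x.1) + m₁₁ (α₁₂ x.2) + (m₁₂ (α₂₁ x.1) + m₁₂ (α₂₂ x.2)) = x.1
        rw [show m₁₁ (α₁₁ x.1) + m₁₁ (α₁₂ x.2) + (m₁₂ (α₂₁ x.1) + m₁₂ (α₂₂ x.2))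
          = (m₁₁ (α₁₁ x.1) + m₁₂ (α₂₁ x.1)) + (m₁₁ (α₁₂ x.2) + m₁₂ (α₂₂ x.2)) by abel,
          e1, e2, add_zero]
      · show m₂₁ (α₁₁ x.1) + m₂₁ (α₁₂ x.2) + (s' (α₂₁ x.1) + s' (α₂₂ x.2)) = x.2
        rw [show m₂₁ (α₁₁ x.1) + m₂₁ (α₁₂ x.2) + (s' (α₂₁ x.1) + s' (α₂₂ x.2))
          = (m₂₁ (α₁₁ x.1) + s' (α₂₁ x.1)) + (m₂₁ (α₁₂ x.2) + s' (α₂₂ x.2)) by abel,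
          e3, e4, zero_add]
    exact ⟨⟨α, β, hαβ, hβα⟩, rfl⟩
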